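/- arXiv:1301.1857 — 2 statements merged into one kernel-verified Lean document; each statement's English description precedes it below -/
import Mathlib

section
/- Let x, y ∈ ℝⁿ with n ≥ 2 and y strictly decreasing (y₁ > y₂ > ⋯ > yₙ). Suppose there exist real numbers λ ≠ γ and an index j such that xⱼ = γ and xᵢ = λ for all i ≠ j (x is constant except in exactly one coordinate). Then the set I_M(x,y) = {P : P is an n×n permutation matrix and Σᵢ (Pᵀ *ᵥ x)ᵢ · yᵢ = M(x,y)} has cardinality exactly (n−1)!. -/
open Matrix BigOperators

/-- A matrix is doubly stochastic: nonnegative entries, row sums and column sums all 1. -/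
def IsDoublyStochastic {n : ℕ} (A : Matrix (Fin n) (Fin n) ℝ) : Prop :=
  (∀ i j, 0 ≤ A i j) ∧ (∀ i, ∑ j, A i j = 1) ∧ (∀ j, ∑ i, A i j = 1)

/-- `Maj x y` means `x ≺ y`: `x` is majorized by `y`. -/
def Maj {n : ℕ} (x y : Fin n → ℝ) : Prop :=
  ∃ A : Matrix (Fin n) (Fin n) ℝ, IsDoublyStochastic A ∧ x = A *ᵥ y

/-- `MajEq x y` means `x ∼ y`: mutual majorization. -/
def MajEq {n : ℕ} (x y : Fin n → ℝ) : Prop := Maj x y ∧ Maj y x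

/-- `P` is a permutation matrix. -/
def IsPermMatrix {n : ℕ} (P : Matrix (Fin n) (Fin n) ℝ) : Prop :=
  ∃ σ : Equiv.Perm (Fin n), P = σ.permMatrix ℝ

/-- The increasing rearrangement `x↑` of a vector. -/
noncomputable def incSort {n : ℕ} (x : Fin n → ℝ) : Fin n → ℝ := x ∘ Tuple.sort x

/-- The decreasing rearrangement `x↓` of a vector. -/
noncomputable def decSort {n : ℕ} (x : Fin n → ℝ) : Fin n → ℝ :=
  fun i => (x ∘ Tuple.sort x) i.rev

lemma permMatrix_inj {n : ℕ} : Function.Injective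
    (fun σ : Equiv.Perm (Fin n) => σ.permMatrix ℝ) := by
  intro σ τ h
  ext i
  have h2 := congrFun (congrFun h i) (σ i)
  simp [Equiv.Perm.permMatrix, PEquiv.toMatrix_apply, Equiv.toPEquiv_apply] at h2
  by_contra hne
  exact hne (congrArg Fin.val h2.symm)

lemma permMatrix_transpose_mulVec {n : ℕ} (σ : Equiv.Perm (Fin n)) (x : Fin n → ℝ) (i : Fin n) :
    ((σ.permMatrix ℝ)ᵀ *ᵥ x) i = x (σ⁻¹ i) := by
  simp only [mulVec, dotProduct, transpose_apply, Equiv.Perm.permMatrix,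
    PEquiv.toMatrix_apply, Equiv.toPEquiv_apply, Option.mem_def, Option.some.injEq,
    ite_mul, one_mul, zero_mul]
  rw [Finset.sum_eq_single (σ⁻¹ i)] <;> simp +contextual [Equiv.eq_symm_apply]

lemma card_perm_fiber {n : ℕ} (j i₀ : Fin n) :
    Nat.card {σ : Equiv.Perm (Fin n) // σ j = i₀} = (n - 1).factorial := by
  have e1 : {σ : Equiv.Perm (Fin n) // σ j = i₀} ≃ {σ : Equiv.Perm (Fin n) // σ j = j} :=
    { toFun := fun σ => ⟨Equiv.swap i₀ j * σ.1, by simp [σ.2]⟩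
      invFun := fun τ => ⟨Equiv.swap i₀ j * τ.1, by simp [τ.2]⟩
      left_inv := fun σ => by simp [← mul_assoc]
      right_inv := fun τ => by simp [← mul_assoc] }
  have e2 : {σ : Equiv.Perm (Fin n) // σ j = j} ≃
      {σ : Equiv.Perm (Fin n) // ∀ a, ¬a ≠ j → σ a = a} :=
    Equiv.subtypeEquivRight (by
      intro σ
      constructor
      · intro h a ha; rw [not_not.mp ha]; exact h
      · intro h; exact h j (by simp))
  have e3 := (Equiv.Perm.subtypeEquivSubtypePerm (fun i : Fin n => i ≠ j)).symm
  rw [Nat.card_eq_fintype_card, Fintype.card_congr ((e1.trans e2).trans e3),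
    Fintype.card_perm]
  congr 1
  simp only [Ne]
  rw [Fintype.card_subtype_compl, Fintype.card_subtype_eq, Fintype.card_fin]

lemma decSort_strictAnti {n : ℕ} (y : Fin n → ℝ) (hy : StrictAnti y) : decSort y = y := by
  have hmono : Monotone (y ∘ Fin.revPerm) := by
    intro a b hab
    rcases eq_or_lt_of_le hab with rfl | h
    · exact le_refl _
    · exact (hy (by simpa [Fin.rev_lt_rev] using h)).le
  have h1 := (Tuple.comp_sort_eq_comp_iff_monotone (f := y) (σ := Fin.revPerm)).mpr hmono
  funext i
  have h2 := congrFun h1 i.rev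
  simp only [Function.comp_apply, Fin.revPerm_apply, Fin.rev_rev] at h2
  simpa [decSort] using h2.symm

lemma sort_almost_const {n : ℕ} (x : Fin n → ℝ) (lam gam : ℝ) (j a : Fin n)
    (hj : x j = gam) (hx : ∀ i, i ≠ j → x i = lam)
    (hmono : Monotone (fun i : Fin n => if i = a then gam else lam)) :
    x ∘ Tuple.sort x = fun i => if i = a then gam else lam := by
  have hcomp : x ∘ Equiv.swap j a = fun i => if i = a then gam else lam := by
    funext i
    rcases eq_or_ne i j with rfl | hij
    · simp only [Function.comp_apply, Equiv.swap_apply_left]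
      rcases eq_or_ne a i with rfl | haj
      · simp [hj]
      · rw [hx a haj, if_neg (fun h => haj h.symm)]
    · rcases eq_or_ne i a with rfl | hia
      · simp [Equiv.swap_apply_right, hj]
      · simp only [Function.comp_apply, Equiv.swap_apply_of_ne_of_ne hij hia, if_neg hia]
        exact hx i hij
  rw [← (Tuple.comp_sort_eq_comp_iff_monotone (f := x) (σ := Equiv.swap j a)).mpr
    (hcomp ▸ hmono), hcomp]

lemma sum_step {n : ℕ} (lam gam : ℝ) (i₀ : Fin n) (z : Fin n → ℝ) :
    ∑ i, (if i = i₀ then gam else lam) * z i = lam * ∑ i, z i + (gam - lam) * z i₀ := by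
  have h : ∀ i : Fin n, (if i = i₀ then gam else lam) * z i
      = lam * z i + (if i = i₀ then (gam - lam) * z i₀ else 0) := by
    intro i
    split_ifs with h
    · subst h; ring
    · ring
  simp only [h]
  rw [Finset.sum_add_distrib, Finset.sum_ite_eq' Finset.univ i₀, if_pos (Finset.mem_univ _),
    Finset.mul_sum]

/-- if `x` is constant except in exactly one coordinate and `y` is
strictly decreasing, then `|I_M(x,y)| = (n - 1)!`. -/
theorem card_IM_eq_of_almost_constant {n : ℕ} (hn : 2 ≤ n) (x y : Fin n → ℝ)
    (hy : StrictAnti y) (lam gam : ℝ) (hlg : lam ≠ gam) (j : Fin n)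
    (hj : x j = gam) (hx : ∀ i, i ≠ j → x i = lam) :
    {P : Matrix (Fin n) (Fin n) ℝ | IsPermMatrix P ∧
      ∑ i, (Pᵀ *ᵥ x) i * y i = ∑ i, decSort x i * decSort y i}.ncard
      = (n - 1).factorial := by
  haveI : NeZero n := ⟨by omega⟩
  set top : Fin n := Fin.rev 0 with htopdef
  have htop : ∀ i : Fin n, i ≤ top := by
    intro i
    rw [Fin.le_def, htopdef, Fin.val_rev]
    have := i.isLt
    simp; omega
  -- get the explicit decreasing rearrangement of x
  obtain ⟨i₀, hdx⟩ : ∃ i₀ : Fin n, decSort x = fun i => if i = i₀ then gam else lam := by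
    rcases lt_or_gt_of_ne hlg with hlt | hgt
    · -- lam < gam : sorted increasingly the gam sits at the top, decSort puts it at 0
      refine ⟨0, ?_⟩
      have hmono : Monotone (fun i : Fin n => if i = top then gam else lam) := by
        intro b c hbc
        rcases eq_or_ne c top with rfl | hc
        · dsimp only; split_ifs
          · exact le_refl _
          · exact hlt.le
        · have hb : b ≠ top := fun h => hc (le_antisymm (htop c) (h ▸ hbc))
          simp [hb, hc]
      have hs := sort_almost_const x lam gam j top hj hx hmono
      funext i
      simp only [decSort, hs]
      exact if_congr (by rw [htopdef, Fin.rev_inj]) rfl rfl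
    · -- gam < lam : sorted increasingly the gam sits at 0, decSort puts it at top
      refine ⟨top, ?_⟩
      have hmono : Monotone (fun i : Fin n => if i = (0 : Fin n) then gam else lam) := by
        intro b c hbc
        rcases eq_or_ne b 0 with rfl | hb
        · dsimp only; rw [if_pos rfl]; split_ifs
          · exact le_refl _
          · exact hgt.le
        · have hc : c ≠ 0 := fun h => hb (le_antisymm (h ▸ hbc) (Fin.zero_le b))
          simp [hb, hc]
      have hs := sort_almost_const x lam gam j 0 hj hx hmono
      funext i
      simp only [decSort, hs]
      exact if_congr (by rw [htopdef, Fin.rev_eq_iff]) rfl rfl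
  have hdy := decSort_strictAnti y hy
  -- the target value M
  have hM : ∑ i, decSort x i * decSort y i = lam * ∑ i, y i + (gam - lam) * y i₀ := by
    rw [hdx, hdy, sum_step]
  -- characterize membership
  have hxi : ∀ i : Fin n, x i = if i = j then gam else lam := by
    intro i
    split_ifs with h
    · subst h; exact hj
    · exact hx i h
  have hcond : ∀ σ : Equiv.Perm (Fin n),
      (∑ i, ((σ.permMatrix ℝ)ᵀ *ᵥ x) i * y i = ∑ i, decSort x i * decSort y i) ↔ σ j = i₀ := by
    intro σ
    have hsum : ∑ i, ((σ.permMatrix ℝ)ᵀ *ᵥ x) i * y i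
        = lam * ∑ i, y i + (gam - lam) * y (σ j) := by
      calc ∑ i, ((σ.permMatrix ℝ)ᵀ *ᵥ x) i * y i
          = ∑ i, x (σ⁻¹ i) * y i := by
            simp only [permMatrix_transpose_mulVec]
        _ = ∑ i, x (σ⁻¹ (σ i)) * y (σ i) := (Equiv.sum_comp σ fun i => x (σ⁻¹ i) * y i).symm
        _ = ∑ i, (if i = j then gam else lam) * y (σ i) := by
            simp only [Equiv.Perm.inv_def, Equiv.symm_apply_apply]
            exact Finset.sum_congr rfl fun i _ => by rw [← hxi i]
        _ = lam * ∑ i, y (σ i) + (gam - lam) * y (σ j) := sum_step lam gam j (fun i => y (σ i))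
        _ = lam * ∑ i, y i + (gam - lam) * y (σ j) := by
            rw [Equiv.sum_comp σ y]
    rw [hsum, hM]
    constructor
    · intro h
      have hgl : gam - lam ≠ 0 := sub_ne_zero.mpr (Ne.symm hlg)
      have : y (σ j) = y i₀ := by
        have := add_left_cancel h
        exact mul_left_cancel₀ hgl this
      exact hy.injective this
    · intro h; rw [h]
  -- rewrite the set as an image
  have hset : {P : Matrix (Fin n) (Fin n) ℝ | IsPermMatrix P ∧
      ∑ i, (Pᵀ *ᵥ x) i * y i = ∑ i, decSort x i * decSort y i}
      = (fun σ : Equiv.Perm (Fin n) => σ.permMatrix ℝ) '' {σ | σ j = i₀} := by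
    ext P
    simp only [Set.mem_setOf_eq, Set.mem_image]
    constructor
    · rintro ⟨⟨σ, rfl⟩, hsum⟩
      exact ⟨σ, (hcond σ).mp hsum, rfl⟩
    · rintro ⟨σ, hσ, rfl⟩
      exact ⟨⟨σ, rfl⟩, (hcond σ).mpr hσ⟩
  rw [hset, Set.ncard_image_of_injective _ permMatrix_inj, ← Nat.card_coe_set_eq]
  exact card_perm_fiber j i₀
end

section
/- (Claim 3) Let n ≥ 2, let α ∈ ℝⁿ have strictly decreasing coordinates (α₁ > α₂ > ⋯ > αₙ), and let A be an n×n real matrix with all entries positive such that A *ᵥ (P *ᵥ α) ∼ A *ᵥ α for every n×n permutation matrix P. If some row of A is constant (all its entries equal), then every row of A is constant, i.e. there exist λ₁, …, λₙ ∈ ℝ with A i j = λᵢ for all i, j. -/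
open Matrix BigOperators

open Finset

private lemma count_le_aux {n : ℕ} (x y : Fin n → ℝ) (B : Matrix (Fin n) (Fin n) ℝ)
    (hB : IsDoublyStochastic B) (heq : ∀ i j, B i j ≠ 0 → x i = y j) (v : ℝ) :
    (univ.filter (fun i => x i = v)).card ≤ (univ.filter (fun j => y j = v)).card := by
  classical
  set Fx := univ.filter (fun i => x i = v) with hFx
  set Fy := univ.filter (fun j => y j = v) with hFy
  have key : (Fx.card : ℝ) ≤ (Fy.card : ℝ) := by
    have h1 : (Fx.card : ℝ) = ∑ i ∈ Fx, ∑ j ∈ Fy, B i j := by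
      rw [Finset.card_eq_sum_ones]
      push_cast
      apply Finset.sum_congr rfl
      intro i hi
      have hsub : ∑ j ∈ Fy, B i j = ∑ j, B i j := by
        apply Finset.sum_subset (Finset.subset_univ _)
        intro j _ hj
        by_contra hne
        exact hj (Finset.mem_filter.2 ⟨Finset.mem_univ _,
          by rw [← heq i j hne]; exact (Finset.mem_filter.1 hi).2⟩)
      rw [hsub, hB.2.1 i]
    have h2 : ∑ i ∈ Fx, ∑ j ∈ Fy, B i j ≤ ∑ i, ∑ j ∈ Fy, B i j :=
      Finset.sum_le_sum_of_subset_of_nonneg (Finset.subset_univ _)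
        (fun i _ _ => Finset.sum_nonneg fun j _ => hB.1 i j)
    have h3 : ∑ i, ∑ j ∈ Fy, B i j = (Fy.card : ℝ) := by
      rw [show ∑ i, ∑ j ∈ Fy, B i j = ∑ j ∈ Fy, ∑ i, B i j from Finset.sum_comm]
      rw [Finset.card_eq_sum_ones]
      push_cast
      apply Finset.sum_congr rfl
      intro j _
      exact hB.2.2 j
    rw [h1]
    calc ∑ i ∈ Fx, ∑ j ∈ Fy, B i j ≤ ∑ i, ∑ j ∈ Fy, B i j := h2
      _ = (Fy.card : ℝ) := h3
  exact_mod_cast key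

private lemma sq_equality_aux {n : ℕ} {x y : Fin n → ℝ} {B : Matrix (Fin n) (Fin n) ℝ}
    (hB : IsDoublyStochastic B) (hx : ∀ i, x i = ∑ j, B i j * y j) :
    ∑ i, ∑ j, B i j * (y j - x i)^2 = (∑ j, y j^2) - ∑ i, x i^2 := by
  have hrow : ∀ i, ∑ j, B i j * (y j - x i)^2 = (∑ j, B i j * y j ^ 2) - x i ^ 2 := by
    intro i
    have h1 : ∑ j, B i j * (y j - x i)^2
        = ∑ j, (B i j * y j ^ 2 - 2 * x i * (B i j * y j) + x i ^ 2 * B i j) := by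
      apply Finset.sum_congr rfl; intro j _; ring
    rw [h1, Finset.sum_add_distrib, Finset.sum_sub_distrib, ← Finset.mul_sum, ← Finset.mul_sum,
      ← hx i, hB.2.1 i]
    ring
  rw [Finset.sum_congr rfl (fun i _ => hrow i), Finset.sum_sub_distrib]
  congr 1
  rw [Finset.sum_comm]
  apply Finset.sum_congr rfl
  intro j _
  rw [← Finset.sum_mul, hB.2.2 j, one_mul]

private lemma majEq_count {n : ℕ} {x y : Fin n → ℝ} (h : MajEq x y) (v : ℝ) :
    (univ.filter (fun i => x i = v)).card = (univ.filter (fun j => y j = v)).card := by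
  classical
  obtain ⟨⟨B, hB, hxB⟩, ⟨C, hC, hyC⟩⟩ := h
  have hx : ∀ i, x i = ∑ j, B i j * y j := by
    intro i; rw [hxB]; simp [Matrix.mulVec, dotProduct]
  have hy : ∀ j, y j = ∑ i, C j i * x i := by
    intro j; rw [hyC]; simp [Matrix.mulVec, dotProduct]
  have hSB := sq_equality_aux hB hx
  have hSC := sq_equality_aux hC hy
  have hBnn : ∀ i ∈ (univ : Finset (Fin n)), (0:ℝ) ≤ ∑ j, B i j * (y j - x i)^2 :=
    fun i _ => Finset.sum_nonneg fun j _ => mul_nonneg (hB.1 i j) (sq_nonneg _)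
  have hCnn : ∀ j ∈ (univ : Finset (Fin n)), (0:ℝ) ≤ ∑ i, C j i * (x i - y j)^2 :=
    fun j _ => Finset.sum_nonneg fun i _ => mul_nonneg (hC.1 j i) (sq_nonneg _)
  have hSB0 : ∑ i, ∑ j, B i j * (y j - x i)^2 = 0 := by
    have h1 : 0 ≤ ∑ i, ∑ j, B i j * (y j - x i)^2 := Finset.sum_nonneg hBnn
    have h2 : 0 ≤ ∑ j, ∑ i, C j i * (x i - y j)^2 := Finset.sum_nonneg hCnn
    linarith [hSB, hSC]
  have hSC0 : ∑ j, ∑ i, C j i * (x i - y j)^2 = 0 := by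
    have h1 : 0 ≤ ∑ i, ∑ j, B i j * (y j - x i)^2 := Finset.sum_nonneg hBnn
    have h2 : 0 ≤ ∑ j, ∑ i, C j i * (x i - y j)^2 := Finset.sum_nonneg hCnn
    linarith [hSB, hSC]
  have heqB : ∀ i j, B i j ≠ 0 → x i = y j := by
    intro i j hne
    have h1 := (Finset.sum_eq_zero_iff_of_nonneg hBnn).1 hSB0 i (Finset.mem_univ i)
    have h2 := (Finset.sum_eq_zero_iff_of_nonneg
      (fun j _ => mul_nonneg (hB.1 i j) (sq_nonneg (y j - x i)))).1 h1 j (Finset.mem_univ j)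
    have h3 : (y j - x i)^2 = 0 := by
      rcases mul_eq_zero.1 h2 with h | h
      · exact absurd h hne
      · exact h
    have := pow_eq_zero_iff (n := 2) (by norm_num) |>.1 h3
    linarith [this]
  have heqC : ∀ j i, C j i ≠ 0 → y j = x i := by
    intro j i hne
    have h1 := (Finset.sum_eq_zero_iff_of_nonneg hCnn).1 hSC0 j (Finset.mem_univ j)
    have h2 := (Finset.sum_eq_zero_iff_of_nonneg
      (fun i _ => mul_nonneg (hC.1 j i) (sq_nonneg (x i - y j)))).1 h1 i (Finset.mem_univ i)
    have h3 : (x i - y j)^2 = 0 := by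
      rcases mul_eq_zero.1 h2 with h | h
      · exact absurd h hne
      · exact h
    have := pow_eq_zero_iff (n := 2) (by norm_num) |>.1 h3
    linarith [this]
  exact le_antisymm (count_le_aux x y B hB heqB v) (count_le_aux y x C hC heqC v)

private lemma permMatrix_mulVec {n : ℕ} (σ : Equiv.Perm (Fin n)) (α : Fin n → ℝ) :
    (σ.permMatrix ℝ) *ᵥ α = fun i => α (σ i) := by
  funext i
  simp [Matrix.mulVec, dotProduct, Equiv.Perm.permMatrix, PEquiv.toMatrix_apply,
    Equiv.toPEquiv, Option.mem_def, eq_comm]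

private lemma phi_swap_formula {n : ℕ} (A : Matrix (Fin n) (Fin n) ℝ) (α : Fin n → ℝ)
    (σ : Equiv.Perm (Fin n)) (i p q : Fin n) :
    ∑ j, A i j * α ((σ * Equiv.swap p q) j)
      = (∑ j, A i j * α (σ j)) + (A i p - A i q) * (α (σ q) - α (σ p)) := by
  rcases eq_or_ne p q with rfl | hpq
  · simp
  · have hdiff : ∑ j, (A i j * α (σ (Equiv.swap p q j)) - A i j * α (σ j))
        = (A i p - A i q) * (α (σ q) - α (σ p)) := by
      rw [← Finset.sum_subset (Finset.subset_univ ({p, q} : Finset (Fin n)))]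
      · rw [Finset.sum_pair hpq]
        rw [Equiv.swap_apply_left, Equiv.swap_apply_right]
        ring
      · intro j _ hj
        simp only [Finset.mem_insert, Finset.mem_singleton] at hj
        push_neg at hj
        rw [Equiv.swap_apply_of_ne_of_ne hj.1 hj.2, sub_self]
    rw [Finset.sum_sub_distrib] at hdiff
    have : ∀ j, (σ * Equiv.swap p q) j = σ (Equiv.swap p q j) := fun j => rfl
    simp only [this]
    linarith [hdiff]

private lemma fact_mul_fact_le : ∀ (b a : ℕ), 1 ≤ a → 1 ≤ b →
    Nat.factorial a * Nat.factorial b ≤ Nat.factorial (a + b - 1) := by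
  intro b
  induction b with
  | zero => intro a _ h; omega
  | succ b ih =>
    intro a ha hb
    rcases Nat.eq_or_lt_of_le hb with h1 | h1
    · have hb0 : b = 0 := by omega
      subst hb0
      simp [Nat.factorial]
    · have hb1 : 1 ≤ b := by omega
      have := ih a ha hb1
      have hstep : Nat.factorial a * Nat.factorial (b + 1)
          = (Nat.factorial a * Nat.factorial b) * (b + 1) := by
        rw [Nat.factorial_succ]; ring
      rw [hstep]
      calc (Nat.factorial a * Nat.factorial b) * (b + 1)
          ≤ Nat.factorial (a + b - 1) * (b + 1) := Nat.mul_le_mul_right _ this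
        _ ≤ Nat.factorial (a + b - 1) * (a + b) := by
            apply Nat.mul_le_mul_left; omega
        _ = Nat.factorial (a + b) := by
            obtain ⟨m, hm⟩ : ∃ m, a + b = m + 1 := ⟨a + b - 1, by omega⟩
            have h3 : a + b - 1 = m := by omega
            rw [hm, Nat.factorial_succ]; simp [mul_comm]
        _ = Nat.factorial (a + (b+1) - 1) := by
            have h4 : a + (b+1) - 1 = a + b := by omega
            rw [h4]

private lemma aligned_card_le {n : ℕ} (hn : 2 ≤ n) (α : Fin n → ℝ) (hα : StrictAnti α)
    (a : Fin n → ℝ) (hnc : ¬ ∀ j j' : Fin n, a j = a j') :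
    (univ.filter (fun σ : Equiv.Perm (Fin n) =>
        ∀ p q, (a p - a q) * (α (σ q) - α (σ p)) ≤ 0)).card ≤ Nat.factorial (n - 1) := by
  classical
  set Al := univ.filter (fun σ : Equiv.Perm (Fin n) =>
      ∀ p q, (a p - a q) * (α (σ q) - α (σ p)) ≤ 0) with hAl
  obtain ⟨p0, q0, hlt⟩ : ∃ p q, a p < a q := by
    push_neg at hnc
    obtain ⟨p, q, hne⟩ := hnc
    rcases hne.lt_or_gt with h | h
    · exact ⟨p, q, h⟩
    · exact ⟨q, p, h⟩
  set L := univ.filter (fun j => a j ≤ a p0) with hL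
  have hp0L : p0 ∈ L := Finset.mem_filter.2 ⟨Finset.mem_univ _, le_refl _⟩
  have hq0L : q0 ∉ L := by
    intro h
    exact absurd ((Finset.mem_filter.1 h).2) (not_le.2 hlt)
  have hl1 : 1 ≤ L.card := Finset.card_pos.2 ⟨p0, hp0L⟩
  have hln : L.card ≤ n - 1 := by
    have hsub : L ⊆ univ.erase q0 := by
      intro j hj
      exact Finset.mem_erase.2 ⟨fun h => hq0L (h ▸ hj), Finset.mem_univ _⟩
    have := Finset.card_le_card hsub
    rwa [Finset.card_erase_of_mem (Finset.mem_univ _), Finset.card_univ, Fintype.card_fin] at this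
  -- strict ordering of images
  have hlt_out : ∀ σ ∈ Al, ∀ j ∈ L, ∀ j', j' ∉ L → σ j' < σ j := by
    intro σ hσ j hj j' hj'
    have hσ' := (Finset.mem_filter.1 hσ).2
    have h1 : a j ≤ a p0 := (Finset.mem_filter.1 hj).2
    have h2 : a p0 < a j' := by
      by_contra h
      exact hj' (Finset.mem_filter.2 ⟨Finset.mem_univ _, not_lt.1 h⟩)
    have h3 := hσ' j' j
    have h4 : 0 < a j' - a j := by linarith
    have h5 : α (σ j) - α (σ j') ≤ 0 := by
      by_contra h
      have := mul_pos h4 (not_le.1 h)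
      linarith
    have h6 : σ j' ≤ σ j := (hα.le_iff_ge).1 (by linarith)
    have h7 : σ j' ≠ σ j := fun h => by
      have : j' = j := σ.injective h
      exact hj' (this ▸ hj)
    exact lt_of_le_of_ne h6 h7
  have claim1 : ∀ σ ∈ Al, ∀ j ∈ L, n - L.card ≤ ((σ j : Fin n) : ℕ) := by
    intro σ hσ j hj
    have hinj : (Lᶜ : Finset (Fin n)).card ≤ (Finset.range ((σ j : Fin n) : ℕ)).card := by
      apply Finset.card_le_card_of_injOn (fun j' => ((σ j' : Fin n) : ℕ))
      · intro j' hj'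
        rw [Finset.mem_coe, Finset.mem_range]
        exact_mod_cast hlt_out σ hσ j hj j' (Finset.mem_compl.1 hj')
      · intro j1 _ j2 _ h
        exact σ.injective (Fin.ext h)
    rwa [Finset.card_compl, Finset.card_range, Fintype.card_fin] at hinj
  have claim2 : ∀ σ ∈ Al, ∀ j', j' ∉ L → ((σ j' : Fin n) : ℕ) < n - L.card := by
    intro σ hσ j' hj'
    have hinj : L.card ≤ (Finset.Ico (((σ j' : Fin n) : ℕ) + 1) n).card := by
      apply Finset.card_le_card_of_injOn (fun j => ((σ j : Fin n) : ℕ))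
      · intro j hj
        rw [Finset.mem_coe, Finset.mem_Ico]
        constructor
        · exact_mod_cast hlt_out σ hσ j hj j' hj'
        · exact (σ j).isLt
      · intro j1 _ j2 _ h
        exact σ.injective (Fin.ext h)
    rw [Nat.card_Ico] at hinj
    have hv : ((σ j' : Fin n) : ℕ) < n := (σ j').isLt
    omega
  rcases Finset.eq_empty_or_nonempty Al with hAe | ⟨σ₀, hσ₀⟩
  · rw [hAe]
    simp
  set Top := univ.filter (fun k : Fin n => n - L.card ≤ (k : ℕ)) with hTop
  have hmem1 : ∀ σ ∈ Al, ∀ j, j ∈ L → σ j ∈ Top := by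
    intro σ hσ j hj
    exact Finset.mem_filter.2 ⟨Finset.mem_univ _, claim1 σ hσ j hj⟩
  have hmem2 : ∀ σ ∈ Al, ∀ j', j' ∉ L → σ j' ∈ Topᶜ := by
    intro σ hσ j' hj'
    exact Finset.mem_compl.2 (fun h => by
      have := (Finset.mem_filter.1 h).2
      have := claim2 σ hσ j' hj'
      omega)
  have hTopge : L.card ≤ Top.card := by
    apply Finset.card_le_card_of_injOn (fun j => σ₀ j)
    · intro j hj; exact hmem1 σ₀ hσ₀ j hj
    · intro j1 _ j2 _ h; exact σ₀.injective h
  have hTopcge : (Lᶜ : Finset (Fin n)).card ≤ (Topᶜ : Finset (Fin n)).card := by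
    apply Finset.card_le_card_of_injOn (fun j => σ₀ j)
    · intro j hj; exact hmem2 σ₀ hσ₀ j (Finset.mem_compl.1 hj)
    · intro j1 _ j2 _ h; exact σ₀.injective h
  have hcompl1 : (Lᶜ : Finset (Fin n)).card = n - L.card := by
    rw [Finset.card_compl, Fintype.card_fin]
  have hcompl2 : (Topᶜ : Finset (Fin n)).card = n - Top.card := by
    rw [Finset.card_compl, Fintype.card_fin]
  have hLn : L.card ≤ n := by
    have := Finset.card_le_univ L
    rwa [Fintype.card_fin] at this
  have hTn : Top.card ≤ n := by
    have := Finset.card_le_univ Top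
    rwa [Fintype.card_fin] at this
  have hTop_eq : Top.card = L.card := by omega
  have hTopc_eq : (Topᶜ : Finset (Fin n)).card = n - L.card := by omega
  -- the injection into pairs of embeddings
  set F : Equiv.Perm (Fin n) →
      ({x // x ∈ L} ↪ {x // x ∈ Top}) ×
      ({x // x ∈ (Lᶜ : Finset (Fin n))} ↪ {x // x ∈ (Topᶜ : Finset (Fin n))}) := fun σ =>
    if h : σ ∈ Al then
      (⟨fun j => ⟨σ j.1, hmem1 σ h j.1 j.2⟩,
        fun u v huv => Subtype.ext (σ.injective (congrArg Subtype.val huv))⟩,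
       ⟨fun j => ⟨σ j.1, hmem2 σ h j.1 (Finset.mem_compl.1 j.2)⟩,
        fun u v huv => Subtype.ext (σ.injective (congrArg Subtype.val huv))⟩)
    else
      (⟨fun j => ⟨σ₀ j.1, hmem1 σ₀ hσ₀ j.1 j.2⟩,
        fun u v huv => Subtype.ext (σ₀.injective (congrArg Subtype.val huv))⟩,
       ⟨fun j => ⟨σ₀ j.1, hmem2 σ₀ hσ₀ j.1 (Finset.mem_compl.1 j.2)⟩,
        fun u v huv => Subtype.ext (σ₀.injective (congrArg Subtype.val huv))⟩) with hF
  have hinjOn : ∀ σ1 ∈ Al, ∀ σ2 ∈ Al, F σ1 = F σ2 → σ1 = σ2 := by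
    intro σ1 h1 σ2 h2 heq
    apply Equiv.ext
    intro j
    by_cases hj : j ∈ L
    · have h := congrArg (fun t : ({x // x ∈ L} ↪ {x // x ∈ Top}) ×
          ({x // x ∈ (Lᶜ : Finset (Fin n))} ↪ {x // x ∈ (Topᶜ : Finset (Fin n))}) =>
          ((t.1 ⟨j, hj⟩ : {x // x ∈ Top}) : Fin n)) heq
      simp only [hF, dif_pos h1, dif_pos h2, Function.Embedding.coeFn_mk] at h; exact h
    · have h := congrArg (fun t : ({x // x ∈ L} ↪ {x // x ∈ Top}) ×
          ({x // x ∈ (Lᶜ : Finset (Fin n))} ↪ {x // x ∈ (Topᶜ : Finset (Fin n))}) =>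
          ((t.2 ⟨j, Finset.mem_compl.2 hj⟩ : {x // x ∈ (Topᶜ : Finset (Fin n))}) : Fin n)) heq
      simp only [hF, dif_pos h1, dif_pos h2, Function.Embedding.coeFn_mk] at h; exact h
  have hcard : Al.card ≤ Fintype.card (({x // x ∈ L} ↪ {x // x ∈ Top}) ×
      ({x // x ∈ (Lᶜ : Finset (Fin n))} ↪ {x // x ∈ (Topᶜ : Finset (Fin n))})) := by
    have := Finset.card_le_card_of_injOn F (fun σ _ => Finset.mem_univ (F σ)) hinjOn
    rwa [Finset.card_univ] at this
  have hcardT : Fintype.card (({x // x ∈ L} ↪ {x // x ∈ Top}) ×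
      ({x // x ∈ (Lᶜ : Finset (Fin n))} ↪ {x // x ∈ (Topᶜ : Finset (Fin n))}))
      = Nat.factorial L.card * Nat.factorial (n - L.card) := by
    rw [Fintype.card_prod, Fintype.card_embedding_eq, Fintype.card_embedding_eq,
      Fintype.card_coe, Fintype.card_coe, Fintype.card_coe, Fintype.card_coe,
      hTop_eq, hTopc_eq, hcompl1, Nat.descFactorial_self, Nat.descFactorial_self]
  have hfin : Nat.factorial L.card * Nat.factorial (n - L.card) ≤ Nat.factorial (n - 1) := by
    have h1 : 1 ≤ n - L.card := by omega
    have := fact_mul_fact_le (n - L.card) L.card hl1 h1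
    have heq2 : L.card + (n - L.card) - 1 = n - 1 := by omega
    rwa [heq2] at this
  omega

/-- Claim 3: if some row of `A` is constant, then every row of `A`
is constant. -/
theorem allRows_constant_of_some_row_constant {n : ℕ} (hn : 2 ≤ n) (α : Fin n → ℝ)
    (hα : StrictAnti α) (A : Matrix (Fin n) (Fin n) ℝ) (hpos : ∀ i j, 0 < A i j)
    (hA : ∀ P : Matrix (Fin n) (Fin n) ℝ, IsPermMatrix P →
      MajEq (A *ᵥ (P *ᵥ α)) (A *ᵥ α))
    (hm : ∃ m : Fin n, ∀ j j' : Fin n, A m j = A m j') :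
    ∃ lam : Fin n → ℝ, ∀ i j : Fin n, A i j = lam i := by
  classical
  obtain ⟨m, hmconst⟩ := hm
  set φ : Equiv.Perm (Fin n) → Fin n → ℝ := fun σ i => ∑ j, A i j * α (σ j) with hφ
  have hmaj : ∀ σ : Equiv.Perm (Fin n), MajEq (φ σ) (φ 1) := by
    intro σ
    have h := hA (σ.permMatrix ℝ) ⟨σ, rfl⟩
    have hx : A *ᵥ ((σ.permMatrix ℝ) *ᵥ α) = φ σ := by
      rw [permMatrix_mulVec]
      funext i
      simp [hφ, Matrix.mulVec, dotProduct]
    have hy : A *ᵥ α = φ 1 := by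
      funext i
      simp [hφ, Matrix.mulVec, dotProduct]
    rwa [hx, hy] at h
  have hcount : ∀ σ : Equiv.Perm (Fin n), ∀ v : ℝ,
      (univ.filter (fun i => φ σ i = v)).card = (univ.filter (fun i => φ 1 i = v)).card :=
    fun σ v => majEq_count (hmaj σ) v
  set Cset : Finset (Fin n) := univ.filter (fun i => ∀ j j', A i j = A i j') with hCset
  have hmC : m ∈ Cset := Finset.mem_filter.2 ⟨Finset.mem_univ _, hmconst⟩
  have hconstval : ∀ i ∈ Cset, ∀ σ : Equiv.Perm (Fin n), φ σ i = φ 1 i := by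
    intro i hi σ
    have hc := (Finset.mem_filter.1 hi).2
    have h0 : ∀ j, A i j = A i m := fun j => hc j m
    calc φ σ i = ∑ j, A i m * α (σ j) := by
          apply Finset.sum_congr rfl; intro j _; rw [h0 j]
      _ = A i m * ∑ j, α (σ j) := by rw [Finset.mul_sum]
      _ = A i m * ∑ j, α j := by rw [Equiv.sum_comp σ α]
      _ = ∑ j, A i j * α j := by
          rw [Finset.mul_sum]
          exact Finset.sum_congr rfl (fun j _ => by rw [h0 j])
      _ = φ 1 i := by simp [hφ]
  have hNCcount : ∀ σ : Equiv.Perm (Fin n), ∀ v : ℝ,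
      ((Csetᶜ).filter (fun i => φ σ i = v)).card
        = ((Csetᶜ).filter (fun i => φ 1 i = v)).card := by
    intro σ v
    have hsplit : ∀ τ : Equiv.Perm (Fin n),
        (univ.filter (fun i => φ τ i = v)).card
        = (Cset.filter (fun i => φ τ i = v)).card + ((Csetᶜ).filter (fun i => φ τ i = v)).card := by
      intro τ
      rw [← Finset.card_union_of_disjoint (Finset.disjoint_filter_filter disjoint_compl_right)]
      congr 1
      rw [← Finset.filter_union, Finset.union_compl]
    have hCc : (Cset.filter (fun i => φ σ i = v)).card
        = (Cset.filter (fun i => φ 1 i = v)).card := by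
      congr 1
      apply Finset.filter_congr
      intro i hi
      exact iff_of_eq (by rw [hconstval i hi σ])
    have hc2 := hcount σ v
    rw [hsplit σ, hsplit 1, hCc] at hc2
    omega
  by_cases hNC : Csetᶜ = (∅ : Finset (Fin n))
  · refine ⟨fun i => A i ⟨0, by omega⟩, ?_⟩
    intro i j
    have hi : i ∈ Cset := by
      by_contra h
      have hmem : i ∈ Csetᶜ := Finset.mem_compl.2 h
      rw [hNC] at hmem
      exact absurd hmem (Finset.notMem_empty i)
    exact (Finset.mem_filter.1 hi).2 j _
  · exfalso
    have hNCne : (Csetᶜ : Finset (Fin n)).Nonempty := Finset.nonempty_iff_ne_empty.2 hNC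
    obtain ⟨i₀, hi₀⟩ := hNCne
    have hne : ((Csetᶜ).image (φ 1)).Nonempty := ⟨φ 1 i₀, Finset.mem_image_of_mem _ hi₀⟩
    set M := ((Csetᶜ).image (φ 1)).max' hne with hM
    have hb : ∀ σ, ∀ i ∈ (Csetᶜ : Finset (Fin n)), φ σ i ≤ M := by
      intro σ i hi
      have h1 : 0 < ((Csetᶜ).filter (fun i' => φ σ i' = φ σ i)).card :=
        Finset.card_pos.2 ⟨i, Finset.mem_filter.2 ⟨hi, rfl⟩⟩
      rw [hNCcount σ (φ σ i)] at h1
      obtain ⟨i', hi'⟩ := Finset.card_pos.1 h1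
      have h2 := Finset.mem_filter.1 hi'
      rw [← h2.2]
      exact Finset.le_max' _ _ (Finset.mem_image_of_mem _ h2.1)
    have ha : ∀ σ, ∃ i ∈ (Csetᶜ : Finset (Fin n)), φ σ i = M := by
      intro σ
      obtain ⟨i1, hi1, hval⟩ := Finset.mem_image.1 (Finset.max'_mem _ hne)
      have h1 : 0 < ((Csetᶜ).filter (fun i' => φ 1 i' = M)).card :=
        Finset.card_pos.2 ⟨i1, Finset.mem_filter.2 ⟨hi1, hval⟩⟩
      rw [← hNCcount σ M] at h1
      obtain ⟨i2, hi2⟩ := Finset.card_pos.1 h1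
      have h2 := Finset.mem_filter.1 hi2
      exact ⟨i2, h2.1, h2.2⟩
    have hcover : ∀ σ : Equiv.Perm (Fin n), ∃ i ∈ (Csetᶜ : Finset (Fin n)),
        σ ∈ univ.filter (fun τ : Equiv.Perm (Fin n) =>
          ∀ p q, (A i p - A i q) * (α (τ q) - α (τ p)) ≤ 0) := by
      intro σ
      obtain ⟨i, hi, hval⟩ := ha σ
      refine ⟨i, hi, Finset.mem_filter.2 ⟨Finset.mem_univ _, ?_⟩⟩
      intro p q
      by_contra h
      push_neg at h
      have h3 : φ (σ * Equiv.swap p q) i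
          = φ σ i + (A i p - A i q) * (α (σ q) - α (σ p)) := phi_swap_formula A α σ i p q
      have h2 : φ (σ * Equiv.swap p q) i ≤ M := hb _ i hi
      rw [hval] at h3
      linarith
    have hsubset : (univ : Finset (Equiv.Perm (Fin n))) ⊆
        (Csetᶜ).biUnion (fun i => univ.filter (fun τ : Equiv.Perm (Fin n) =>
          ∀ p q, (A i p - A i q) * (α (τ q) - α (τ p)) ≤ 0)) := by
      intro σ _
      obtain ⟨i, hi, hmem⟩ := hcover σ
      exact Finset.mem_biUnion.2 ⟨i, hi, hmem⟩
    have hcard1 := Finset.card_le_card hsubset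
    have hcard2 := Finset.card_biUnion_le (s := (Csetᶜ : Finset (Fin n)))
      (t := fun i => univ.filter (fun τ : Equiv.Perm (Fin n) =>
        ∀ p q, (A i p - A i q) * (α (τ q) - α (τ p)) ≤ 0))
    have hbound : ∀ i ∈ (Csetᶜ : Finset (Fin n)),
        (univ.filter (fun τ : Equiv.Perm (Fin n) =>
          ∀ p q, (A i p - A i q) * (α (τ q) - α (τ p)) ≤ 0)).card ≤ Nat.factorial (n-1) := by
      intro i hi
      apply aligned_card_le hn α hα (A i)
      exact fun h => (Finset.mem_compl.1 hi) (Finset.mem_filter.2 ⟨Finset.mem_univ _, h⟩)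
    have hNCcard : (Csetᶜ : Finset (Fin n)).card ≤ n - 1 := by
      have h1 : 0 < Cset.card := Finset.card_pos.2 ⟨m, hmC⟩
      have h2 : (Csetᶜ : Finset (Fin n)).card = Fintype.card (Fin n) - Cset.card :=
        Finset.card_compl _
      rw [Fintype.card_fin] at h2
      omega
    have hsum : ∑ i ∈ (Csetᶜ : Finset (Fin n)), (univ.filter (fun τ : Equiv.Perm (Fin n) =>
          ∀ p q, (A i p - A i q) * (α (τ q) - α (τ p)) ≤ 0)).card
        ≤ (n - 1) * Nat.factorial (n - 1) := by
      calc ∑ i ∈ (Csetᶜ : Finset (Fin n)), (univ.filter (fun τ : Equiv.Perm (Fin n) =>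
          ∀ p q, (A i p - A i q) * (α (τ q) - α (τ p)) ≤ 0)).card
          ≤ ∑ _i ∈ (Csetᶜ : Finset (Fin n)), Nat.factorial (n - 1) :=
            Finset.sum_le_sum hbound
        _ = (Csetᶜ : Finset (Fin n)).card * Nat.factorial (n - 1) := by
            rw [Finset.sum_const, smul_eq_mul]
        _ ≤ (n - 1) * Nat.factorial (n - 1) :=
            Nat.mul_le_mul_right _ hNCcard
    have htotal : Nat.factorial n ≤ (n - 1) * Nat.factorial (n - 1) := by
      have h0 : (univ : Finset (Equiv.Perm (Fin n))).card = Nat.factorial n := by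
        rw [Finset.card_univ, Fintype.card_perm, Fintype.card_fin]
      omega
    have hfact : Nat.factorial n = n * Nat.factorial (n - 1) := by
      obtain ⟨m', hm'⟩ : ∃ m', n = m' + 1 := ⟨n - 1, by omega⟩
      rw [hm']
      simp [Nat.factorial_succ]
    rw [hfact] at htotal
    have hle : n ≤ n - 1 :=
      Nat.le_of_mul_le_mul_right htotal (Nat.factorial_pos (n-1))
    omega
end
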